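/- arXiv:2402.18949 — 3 statements merged into one kernel-verified Lean document; each statement's English description precedes it below -/
import Mathlib

section
/- Let U₁, U₂ ∈ ℝ^{h×l}, let v*, ṽ₁, ṽ₂ ∈ ℝ^h, set v₁ = v* + ṽ₁ and v₂ = v* + ṽ₂, and for α ∈ [0,1] let g_α = αU₁ + (1−α)U₂. Then for every x ∈ ℝ^l: |(αv₁+(1−α)v₂)ᵀσ(g_α x) − α v₁ᵀσ(U₁ x) − (1−α) v₂ᵀσ(U₂ x)| ≤ α(1−α)(‖ṽ₁‖₂ + ‖ṽ₂‖₂ + 2‖v*‖₂) · ‖(U₂ − U₁)x‖₂. -/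
/-- The Euclidean (ℓ²) norm of a vector in `Fin n → ℝ`. -/
noncomputable def l2norm {n : ℕ} (v : Fin n → ℝ) : ℝ :=
  Real.sqrt (∑ i, (v i) ^ 2)

/-- The two-layer ReLU network `f_{v,U}(x) = vᵀ σ(U x)`. -/
noncomputable def net {hd ld : ℕ} (U : Fin hd → Fin ld → ℝ) (v : Fin hd → ℝ)
    (x : Fin ld → ℝ) : ℝ :=
  ∑ i, v i * max 0 (∑ j, U i j * x j)

lemma cs_abs {n : ℕ} (f g : Fin n → ℝ) :
    ∑ i, |f i| * |g i| ≤ l2norm f * l2norm g := by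
  have h := Finset.sum_mul_sq_le_sq_mul_sq Finset.univ
    (fun i => |f i|) (fun i => |g i|)
  simp only [sq_abs] at h
  have hL : 0 ≤ ∑ i, |f i| * |g i| :=
    Finset.sum_nonneg fun i _ => mul_nonneg (abs_nonneg _) (abs_nonneg _)
  have := Real.sqrt_le_sqrt h
  rw [Real.sqrt_sq hL, Real.sqrt_mul (Finset.sum_nonneg fun i _ => sq_nonneg _)] at this
  exact this

lemma relu_lip (a b : ℝ) : |max 0 a - max 0 b| ≤ |a - b| := by
  rw [max_comm 0 a, max_comm 0 b]
  exact abs_max_sub_max_le_abs a b 0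

/-- deterministic core of Theorem 1's proof.
With `v₁ = v* + ṽ₁`, `v₂ = v* + ṽ₂` and `g_α = αU₁ + (1−α)U₂`, for every `x`:
`|(αv₁+(1−α)v₂)ᵀσ(g_α x) − αv₁ᵀσ(U₁x) − (1−α)v₂ᵀσ(U₂x)|
  ≤ α(1−α)(‖ṽ₁‖₂+‖ṽ₂‖₂+2‖v*‖₂)·‖(U₂−U₁)x‖₂`. -/
theorem interp_deviation_deterministic_bound {hd ld : ℕ}
    (U₁ U₂ : Fin hd → Fin ld → ℝ) (vstar vt₁ vt₂ : Fin hd → ℝ)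
    (α : ℝ) (hα : α ∈ Set.Icc (0:ℝ) 1) (x : Fin ld → ℝ) :
    |net (α • U₁ + (1 - α) • U₂)
        (α • (vstar + vt₁) + (1 - α) • (vstar + vt₂)) x
      - α * net U₁ (vstar + vt₁) x - (1 - α) * net U₂ (vstar + vt₂) x|
    ≤ α * (1 - α) * (l2norm vt₁ + l2norm vt₂ + 2 * l2norm vstar)
        * l2norm (fun i => ∑ j, (U₂ i j - U₁ i j) * x j) := by
  obtain ⟨hα0, hα1⟩ := hα
  have hα1' : 0 ≤ 1 - α := by linarith
  set a : Fin hd → ℝ := fun i => ∑ j, U₁ i j * x j with ha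
  set b : Fin hd → ℝ := fun i => ∑ j, U₂ i j * x j with hb
  set d : Fin hd → ℝ := fun i => ∑ j, (U₂ i j - U₁ i j) * x j with hd'
  have hdab : ∀ i, d i = b i - a i := by
    intro i
    simp only [hd', ha, hb, ← Finset.sum_sub_distrib, sub_mul]
  have hc : ∀ i, (∑ j, (α • U₁ + (1 - α) • U₂) i j * x j)
      = α * a i + (1 - α) * b i := by
    intro i
    simp only [Pi.add_apply, Pi.smul_apply, smul_eq_mul, add_mul,
      Finset.sum_add_distrib, ha, hb, Finset.mul_sum, mul_assoc]
  have key : net (α • U₁ + (1 - α) • U₂)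
        (α • (vstar + vt₁) + (1 - α) • (vstar + vt₂)) x
      - α * net U₁ (vstar + vt₁) x - (1 - α) * net U₂ (vstar + vt₂) x
      = ∑ i, (vstar i * (max 0 (α * a i + (1 - α) * b i)
            - α * max 0 (a i) - (1 - α) * max 0 (b i))
          + α * vt₁ i * (max 0 (α * a i + (1 - α) * b i) - max 0 (a i))
          + (1 - α) * vt₂ i * (max 0 (α * a i + (1 - α) * b i) - max 0 (b i))) := by
    simp only [net, hc, ← ha, ← hb, Finset.mul_sum, ← Finset.sum_sub_distrib]
    refine Finset.sum_congr rfl fun i _ => ?_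
    simp only [Pi.add_apply, Pi.smul_apply, smul_eq_mul]
    ring
  rw [key]
  have pointwise : ∀ i, |vstar i * (max 0 (α * a i + (1 - α) * b i)
            - α * max 0 (a i) - (1 - α) * max 0 (b i))
          + α * vt₁ i * (max 0 (α * a i + (1 - α) * b i) - max 0 (a i))
          + (1 - α) * vt₂ i * (max 0 (α * a i + (1 - α) * b i) - max 0 (b i))|
      ≤ 2 * α * (1 - α) * (|vstar i| * |d i|)
        + α * (1 - α) * (|vt₁ i| * |d i|) + α * (1 - α) * (|vt₂ i| * |d i|) := by
    intro i
    set C := max 0 (α * a i + (1 - α) * b i)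
    set A := max 0 (a i)
    set B := max 0 (b i)
    have h1 : |C - A| ≤ (1 - α) * |d i| := by
      have := relu_lip (α * a i + (1 - α) * b i) (a i)
      calc |C - A| ≤ |α * a i + (1 - α) * b i - a i| := this
        _ = |(1 - α) * (b i - a i)| := by rw [show α * a i + (1 - α) * b i - a i = (1 - α) * (b i - a i) by ring]
        _ = (1 - α) * |d i| := by
            rw [abs_mul, abs_of_nonneg hα1', hdab i]
    have h2 : |C - B| ≤ α * |d i| := by
      have := relu_lip (α * a i + (1 - α) * b i) (b i)
      calc |C - B| ≤ |α * a i + (1 - α) * b i - b i| := this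
        _ = |α * (b i - a i)| := by rw [show α * a i + (1 - α) * b i - b i = α * (a i - b i) by ring, ← abs_neg, show -(α * (a i - b i)) = α * (b i - a i) by ring]
        _ = α * |d i| := by rw [abs_mul, abs_of_nonneg hα0, hdab i]
    have h3 : |C - α * A - (1 - α) * B| ≤ 2 * α * (1 - α) * |d i| := by
      have : C - α * A - (1 - α) * B = α * (C - A) + (1 - α) * (C - B) := by ring
      rw [this]
      calc |α * (C - A) + (1 - α) * (C - B)|
          ≤ |α * (C - A)| + |(1 - α) * (C - B)| := abs_add_le _ _
        _ = α * |C - A| + (1 - α) * |C - B| := by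
            rw [abs_mul, abs_mul, abs_of_nonneg hα0, abs_of_nonneg hα1']
        _ ≤ α * ((1 - α) * |d i|) + (1 - α) * (α * |d i|) := by
            gcongr
        _ = 2 * α * (1 - α) * |d i| := by ring
    calc |vstar i * (C - α * A - (1 - α) * B) + α * vt₁ i * (C - A)
            + (1 - α) * vt₂ i * (C - B)|
        ≤ |vstar i * (C - α * A - (1 - α) * B)| + |α * vt₁ i * (C - A)|
            + |(1 - α) * vt₂ i * (C - B)| := abs_add_three _ _ _
      _ = |vstar i| * |C - α * A - (1 - α) * B| + α * |vt₁ i| * |C - A|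
            + (1 - α) * |vt₂ i| * |C - B| := by
          rw [abs_mul, abs_mul, abs_mul, abs_mul, abs_mul,
            abs_of_nonneg hα0, abs_of_nonneg hα1']
      _ ≤ |vstar i| * (2 * α * (1 - α) * |d i|) + α * |vt₁ i| * ((1 - α) * |d i|)
            + (1 - α) * |vt₂ i| * (α * |d i|) := by
          gcongr <;> positivity
      _ = 2 * α * (1 - α) * (|vstar i| * |d i|)
          + α * (1 - α) * (|vt₁ i| * |d i|) + α * (1 - α) * (|vt₂ i| * |d i|) := by
          ring
  calc |∑ i, (vstar i * (max 0 (α * a i + (1 - α) * b i)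
            - α * max 0 (a i) - (1 - α) * max 0 (b i))
          + α * vt₁ i * (max 0 (α * a i + (1 - α) * b i) - max 0 (a i))
          + (1 - α) * vt₂ i * (max 0 (α * a i + (1 - α) * b i) - max 0 (b i)))|
      ≤ ∑ i, |vstar i * (max 0 (α * a i + (1 - α) * b i)
            - α * max 0 (a i) - (1 - α) * max 0 (b i))
          + α * vt₁ i * (max 0 (α * a i + (1 - α) * b i) - max 0 (a i))
          + (1 - α) * vt₂ i * (max 0 (α * a i + (1 - α) * b i) - max 0 (b i))| :=
        Finset.abs_sum_le_sum_abs _ _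
    _ ≤ ∑ i, (2 * α * (1 - α) * (|vstar i| * |d i|)
          + α * (1 - α) * (|vt₁ i| * |d i|) + α * (1 - α) * (|vt₂ i| * |d i|)) :=
        Finset.sum_le_sum fun i _ => pointwise i
    _ = 2 * α * (1 - α) * (∑ i, |vstar i| * |d i|)
        + α * (1 - α) * (∑ i, |vt₁ i| * |d i|)
        + α * (1 - α) * (∑ i, |vt₂ i| * |d i|) := by
        simp [Finset.sum_add_distrib, Finset.mul_sum]
    _ ≤ α * (1 - α) * (l2norm vt₁ + l2norm vt₂ + 2 * l2norm vstar) * l2norm d := by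
        have c1 := cs_abs vstar d
        have c2 := cs_abs vt₁ d
        have c3 := cs_abs vt₂ d
        have hαα : 0 ≤ α * (1 - α) := mul_nonneg hα0 hα1'
        nlinarith [hαα, c1, c2, c3]
end

section
/- Let d > 0, h, l ≥ 1, fix x ∈ ℝ^l and centers c_{ij} ∈ ℝ (1 ≤ i ≤ h, 1 ≤ j ≤ l), and let δ ∈ (0,1) and k ≥ 1. Let U₁ and U₂ be independent random h×l matrices whose entries are all independent, with the (i,j) entry of each uniformly distributed on [c_{ij} − d/2, c_{ij} + d/2]. Then with probability at least 1 − δ/k, ‖(U₂ − U₁)x‖₂ ≤ d ‖x‖₂ √(h log(2hk/δ)). -/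
open MeasureTheory

/-- The uniform probability distribution on the interval `[a, b]`. -/
noncomputable def unif (a b : ℝ) : Measure ℝ :=
  (ENNReal.ofReal (b - a))⁻¹ • volume.restrict (Set.Icc a b)

/-- The law of a random `h × l` matrix whose entries are independent, with the
`(i,j)` entry uniform on the interval of length `d` centered at `c i j`. -/
noncomputable def matrixUnif {hd ld : ℕ} (c : Fin hd → Fin ld → ℝ) (d : ℝ) :
    Measure (Fin hd → Fin ld → ℝ) :=
  Measure.pi fun i => Measure.pi fun j => unif (c i j - d / 2) (c i j + d / 2)

/-! ### Auxiliary lemmas -/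

section Aux

/-- Type synonym used to transport the `volume`-based Fubini lemmas to arbitrary
families of measures. -/
def MDCSyn {ι : Type*} (E : Type*) (_ : ι) : Type _ := E

instance {ι E : Type*} [MeasurableSpace E] (i : ι) : MeasurableSpace (MDCSyn E i) :=
  inferInstanceAs (MeasurableSpace E)

lemma mdc_integral_pi_prod {ι : Type*} [Fintype ι] {E : Type*} [MeasurableSpace E]
    (μ : ι → Measure E) [∀ i, SigmaFinite (μ i)] (f : ι → E → ℝ) :
    ∫ x : ι → E, ∏ i, f i (x i) ∂Measure.pi μ = ∏ i, ∫ x, f i x ∂(μ i) := by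
  letI : ∀ i, MeasureSpace (MDCSyn E i) := fun i => ⟨μ i⟩
  letI : ∀ i, SigmaFinite (volume : Measure (MDCSyn E i)) :=
    fun i => (inferInstance : SigmaFinite (μ i))
  exact MeasureTheory.integral_fintype_prod_eq_prod (E := fun _ => E) f (μ := μ)

lemma mdc_integrable_pi_prod {ι : Type*} [Fintype ι] {E : Type*} [MeasurableSpace E]
    (μ : ι → Measure E) [∀ i, SigmaFinite (μ i)] (f : ι → E → ℝ)
    (hf : ∀ i, Integrable (f i) (μ i)) :
    Integrable (fun x : ι → E => ∏ i, f i (x i)) (Measure.pi μ) := by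
  letI : ∀ i, MeasureSpace (MDCSyn E i) := fun i => ⟨μ i⟩
  letI : ∀ i, SigmaFinite (volume : Measure (MDCSyn E i)) :=
    fun i => (inferInstance : SigmaFinite (μ i))
  exact MeasureTheory.Integrable.fintype_prod_dep (E := fun _ => E) hf

lemma mdc_unif_prob {a b : ℝ} (h : a < b) : IsProbabilityMeasure (unif a b) := by
  constructor
  rw [unif, Measure.smul_apply, Measure.restrict_apply MeasurableSet.univ,
    Set.univ_inter, Real.volume_Icc, smul_eq_mul,
    ENNReal.inv_mul_cancel (by simp [h]) ENNReal.ofReal_ne_top]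

lemma mdc_unif_integrable_exp {a b : ℝ} (h : a < b) (cc : ℝ) :
    Integrable (fun y => Real.exp (cc * y)) (unif a b) := by
  rw [unif]
  exact Integrable.smul_measure
    ((Real.continuous_exp.comp (continuous_const.mul continuous_id)).integrableOn_Icc)
    (ENNReal.inv_ne_top.2 (by simp [h]))

lemma mdc_unif_integral_exp {m d : ℝ} (hd : 0 < d) (c : ℝ) :
    ∫ y, Real.exp (c * y) ∂(unif (m - d/2) (m + d/2)) =
      (1/d) * ∫ y in Set.Icc (m - d/2) (m + d/2), Real.exp (c * y) := by
  rw [unif, integral_smul_measure]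
  have : m + d/2 - (m - d/2) = d := by ring
  rw [this, ENNReal.toReal_inv, ENNReal.toReal_ofReal hd.le, smul_eq_mul, one_div]

lemma mdc_sinh_le_mul_cosh {u : ℝ} (hu : 0 ≤ u) : Real.sinh u ≤ u * Real.cosh u := by
  have key : ∀ v : ℝ, HasDerivAt (fun w => w * Real.cosh w - Real.sinh w)
      (v * Real.sinh v) v := by
    intro v
    have h1 : HasDerivAt (fun w : ℝ => w * Real.cosh w - Real.sinh w)
        (1 * Real.cosh v + v * Real.sinh v - Real.cosh v) v :=
      ((hasDerivAt_id v).mul (Real.hasDerivAt_cosh v)).sub (Real.hasDerivAt_sinh v)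
    convert h1 using 1; ring
  have hderiv : deriv (fun w => w * Real.cosh w - Real.sinh w) = fun v => v * Real.sinh v :=
    funext fun v => (key v).deriv
  have mono : MonotoneOn (fun w => w * Real.cosh w - Real.sinh w) (Set.Ici 0) := by
    apply monotoneOn_of_deriv_nonneg (convex_Ici 0)
    · exact (Continuous.sub (continuous_id.mul Real.continuous_cosh)
        Real.continuous_sinh).continuousOn
    · exact fun v _ => ((key v).differentiableAt).differentiableWithinAt
    · intro v hv
      rw [interior_Ici] at hv
      rw [hderiv]
      exact mul_nonneg hv.le (Real.sinh_nonneg_iff.2 hv.le)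
  have := mono (Set.self_mem_Ici) (Set.mem_Ici.2 hu) hu
  simp only [Real.cosh_zero, Real.sinh_zero, zero_mul, sub_zero, mul_zero] at this
  linarith

lemma mdc_sinh_div_le (u : ℝ) (hu : u ≠ 0) : Real.sinh u / u ≤ Real.exp (u^2/2) := by
  rcases hu.lt_or_gt with h | h
  · have heq : Real.sinh u / u = Real.sinh (-u) / (-u) := by
      rw [Real.sinh_neg, neg_div_neg_eq]
    rw [heq]
    have h' : 0 < -u := by linarith
    rw [div_le_iff₀ h']
    calc Real.sinh (-u) ≤ (-u) * Real.cosh (-u) := mdc_sinh_le_mul_cosh h'.le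
      _ ≤ (-u) * Real.exp ((-u)^2/2) :=
          mul_le_mul_of_nonneg_left (Real.cosh_le_exp_half_sq (-u)) h'.le
      _ = Real.exp (u^2/2) * (-u) := by rw [neg_pow]; ring_nf
  · rw [div_le_iff₀ h]
    calc Real.sinh u ≤ u * Real.cosh u := mdc_sinh_le_mul_cosh h.le
      _ ≤ u * Real.exp (u^2/2) := mul_le_mul_of_nonneg_left (Real.cosh_le_exp_half_sq u) h.le
      _ = Real.exp (u^2/2) * u := mul_comm _ _

lemma mdc_unif_mgf_le {m d : ℝ} (hd : 0 < d) (c : ℝ) :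
    ∫ y, Real.exp (c * y) ∂(unif (m - d/2) (m + d/2)) ≤
      Real.exp (c * m + c^2 * d^2 / 8) := by
  haveI := mdc_unif_prob (show m - d/2 < m + d/2 by linarith)
  rcases eq_or_ne c 0 with rfl | hc
  · simp
  · rw [mdc_unif_integral_exp hd c]
    have hab : m - d/2 ≤ m + d/2 := by linarith
    have hIcc : ∫ y in Set.Icc (m - d/2) (m + d/2), Real.exp (c * y) =
        c⁻¹ * (Real.exp (c * (m + d/2)) - Real.exp (c * (m - d/2))) := by
      rw [MeasureTheory.integral_Icc_eq_integral_Ioc,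
        ← intervalIntegral.integral_of_le hab]
      have h2 := intervalIntegral.smul_integral_comp_mul_left
        (a := m - d/2) (b := m + d/2) (fun x => Real.exp x) c
      rw [integral_exp, smul_eq_mul] at h2
      rw [← h2, inv_mul_cancel_left₀ hc]
    rw [hIcc]
    set u := c * d / 2 with hu
    have hune : u ≠ 0 := by
      simp only [hu, div_ne_zero_iff]
      exact ⟨mul_ne_zero hc hd.ne', two_ne_zero⟩
    have e1 : Real.exp (c * (m + d/2)) = Real.exp (c * m) * Real.exp u := by
      rw [← Real.exp_add]; congr 1; rw [hu]; ring
    have e2 : Real.exp (c * (m - d/2)) = Real.exp (c * m) * Real.exp (-u) := by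
      rw [← Real.exp_add]; congr 1; rw [hu]; ring
    have key : 1/d * (c⁻¹ * (Real.exp (c * (m + d/2)) - Real.exp (c * (m - d/2)))) =
        Real.exp (c * m) * (Real.sinh u / u) := by
      rw [e1, e2, Real.sinh_eq]
      field_simp
      ring
    rw [key, Real.exp_add]
    apply mul_le_mul_of_nonneg_left _ (Real.exp_nonneg _)
    calc Real.sinh u / u ≤ Real.exp (u^2/2) := mdc_sinh_div_le u hune
      _ = Real.exp (c^2 * d^2 / 8) := by congr 1; rw [hu]; ring

end Aux

section Matrix

variable {hd ld : ℕ} {c : Fin hd → Fin ld → ℝ} {d : ℝ}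

lemma mdc_rowMeasure_prob (hd' : 0 < d) (i : Fin hd) :
    IsProbabilityMeasure (Measure.pi fun j => unif (c i j - d/2) (c i j + d/2)) := by
  haveI : ∀ j, IsProbabilityMeasure (unif (c i j - d/2) (c i j + d/2)) :=
    fun j => mdc_unif_prob (by linarith)
  infer_instance

lemma mdc_matrixUnif_prob (hd' : 0 < d) : IsProbabilityMeasure (matrixUnif c d) := by
  haveI : ∀ i, IsProbabilityMeasure
      (Measure.pi fun j => unif (c i j - d/2) (c i j + d/2)) :=
    fun i => mdc_rowMeasure_prob hd' i
  rw [matrixUnif]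
  infer_instance

lemma mdc_matrix_integral_row (hd' : 0 < d) (i₀ : Fin hd) (e : Fin ld → ℝ) :
    ∫ U, (∏ j, Real.exp (e j * U i₀ j)) ∂(matrixUnif c d) =
      ∏ j, ∫ y, Real.exp (e j * y) ∂(unif (c i₀ j - d/2) (c i₀ j + d/2)) := by
  classical
  haveI hν : ∀ i j, IsProbabilityMeasure (unif (c i j - d/2) (c i j + d/2)) :=
    fun i j => mdc_unif_prob (by linarith)
  haveI hP : ∀ i, IsProbabilityMeasure
      (Measure.pi fun j => unif (c i j - d/2) (c i j + d/2)) :=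
    fun i => mdc_rowMeasure_prob hd' i
  set F : Fin hd → (Fin ld → ℝ) → ℝ :=
    fun i u => if i = i₀ then ∏ j, Real.exp (e j * u j) else 1 with hF
  have step1 : (fun U : Fin hd → Fin ld → ℝ => ∏ j, Real.exp (e j * U i₀ j)) =
      fun U => ∏ i, F i (U i) := by
    funext U
    simp [hF, Finset.prod_ite_eq']
  rw [matrixUnif, show (fun U : Fin hd → Fin ld → ℝ => ∏ j, Real.exp (e j * U i₀ j)) =
      fun U => ∏ i, F i (U i) from step1,
    mdc_integral_pi_prod _ F]
  have step2 : ∀ i, (∫ u, F i u ∂(Measure.pi fun j => unif (c i j - d/2) (c i j + d/2))) =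
      if i = i₀ then
        ∫ u, (∏ j, Real.exp (e j * u j))
          ∂(Measure.pi fun j => unif (c i j - d/2) (c i j + d/2)) else 1 := by
    intro i
    by_cases h : i = i₀ <;> simp [hF, h]
  rw [Finset.prod_congr rfl (fun i _ => step2 i)]
  rw [Finset.prod_ite_eq' Finset.univ i₀]
  simp only [Finset.mem_univ, if_true]
  exact mdc_integral_pi_prod _ (fun j y => Real.exp (e j * y))

lemma mdc_matrix_integrable_row (hd' : 0 < d) (i₀ : Fin hd) (e : Fin ld → ℝ) :
    Integrable (fun U => ∏ j, Real.exp (e j * U i₀ j)) (matrixUnif c d) := by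
  classical
  haveI hν : ∀ i j, IsProbabilityMeasure (unif (c i j - d/2) (c i j + d/2)) :=
    fun i j => mdc_unif_prob (by linarith)
  haveI hP : ∀ i, IsProbabilityMeasure
      (Measure.pi fun j => unif (c i j - d/2) (c i j + d/2)) :=
    fun i => mdc_rowMeasure_prob hd' i
  set F : Fin hd → (Fin ld → ℝ) → ℝ :=
    fun i u => if i = i₀ then ∏ j, Real.exp (e j * u j) else 1 with hF
  have step1 : (fun U : Fin hd → Fin ld → ℝ => ∏ j, Real.exp (e j * U i₀ j)) =
      fun U => ∏ i, F i (U i) := by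
    funext U
    simp [hF, Finset.prod_ite_eq']
  rw [matrixUnif, step1]
  apply mdc_integrable_pi_prod
  intro i
  by_cases h : i = i₀
  · simp only [hF, h, if_true]
    exact mdc_integrable_pi_prod _ _ (fun j => mdc_unif_integrable_exp (by linarith) (e j))
  · simp only [hF, h, if_false]
    exact integrable_const 1

lemma mdc_matrix_mgf_row_le (hd' : 0 < d) (i₀ : Fin hd) (e : Fin ld → ℝ) :
    ∫ U, (∏ j, Real.exp (e j * U i₀ j)) ∂(matrixUnif c d) ≤
      Real.exp (∑ j, (e j * c i₀ j + (e j)^2 * d^2 / 8)) := by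
  rw [mdc_matrix_integral_row hd' i₀ e, Real.exp_sum]
  exact Finset.prod_le_prod
    (fun j _ => integral_nonneg fun y => Real.exp_nonneg _)
    (fun j _ => mdc_unif_mgf_le hd' (e j))

end Matrix

section Prod

variable {hd ld : ℕ} {c : Fin hd → Fin ld → ℝ} {d : ℝ}

lemma mdc_exp_decomp (i₀ : Fin hd) (w : Fin ld → ℝ) (t : ℝ)
    (Up : (Fin hd → Fin ld → ℝ) × (Fin hd → Fin ld → ℝ)) :
    Real.exp (t * ∑ j, (Up.2 i₀ j - Up.1 i₀ j) * w j) =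
      (∏ j, Real.exp ((-(t * w j)) * Up.1 i₀ j)) *
        (∏ j, Real.exp ((t * w j) * Up.2 i₀ j)) := by
  rw [← Real.exp_sum, ← Real.exp_sum, ← Real.exp_add]
  congr 1
  rw [Finset.mul_sum, ← Finset.sum_add_distrib]
  exact Finset.sum_congr rfl fun j _ => by ring

lemma mdc_prod_integrable (hd' : 0 < d) (i₀ : Fin hd) (w : Fin ld → ℝ) (t : ℝ) :
    Integrable (fun Up => Real.exp (t * ∑ j, (Up.2 i₀ j - Up.1 i₀ j) * w j))
      ((matrixUnif c d).prod (matrixUnif c d)) := by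
  haveI := mdc_matrixUnif_prob (c := c) hd'
  simp_rw [mdc_exp_decomp i₀ w t]
  exact (mdc_matrix_integrable_row hd' i₀ fun j => -(t * w j)).mul_prod
    (mdc_matrix_integrable_row hd' i₀ fun j => t * w j)

lemma mdc_prod_mgf_le (hd' : 0 < d) (i₀ : Fin hd) (w : Fin ld → ℝ) (t : ℝ) :
    ∫ Up, Real.exp (t * ∑ j, (Up.2 i₀ j - Up.1 i₀ j) * w j)
        ∂((matrixUnif c d).prod (matrixUnif c d)) ≤
      Real.exp (t^2 * d^2 * (∑ j, w j ^ 2) / 4) := by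
  haveI := mdc_matrixUnif_prob (c := c) hd'
  simp_rw [mdc_exp_decomp i₀ w t]
  have hfub := integral_prod_mul (μ := matrixUnif c d) (ν := matrixUnif c d)
    (fun U => ∏ j, Real.exp ((-(t * w j)) * U i₀ j))
    (fun U => ∏ j, Real.exp ((t * w j) * U i₀ j))
  rw [hfub]
  have h1 := mdc_matrix_mgf_row_le (c := c) hd' i₀ (fun j => -(t * w j))
  have h2 := mdc_matrix_mgf_row_le (c := c) hd' i₀ (fun j => t * w j)
  calc (∫ U, ∏ j, Real.exp ((-(t * w j)) * U i₀ j) ∂(matrixUnif c d)) *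
        ∫ U, ∏ j, Real.exp ((t * w j) * U i₀ j) ∂(matrixUnif c d)
      ≤ Real.exp (∑ j, ((-(t * w j)) * c i₀ j + (-(t * w j))^2 * d^2 / 8)) *
          Real.exp (∑ j, ((t * w j) * c i₀ j + (t * w j)^2 * d^2 / 8)) := by
        apply mul_le_mul h1 h2
        · exact integral_nonneg fun U => Finset.prod_nonneg fun j _ => Real.exp_nonneg _
        · exact Real.exp_nonneg _
    _ = Real.exp (t^2 * d^2 * (∑ j, w j ^ 2) / 4) := by
        rw [← Real.exp_add]
        congr 1
        rw [← Finset.sum_add_distrib]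
        rw [show t^2 * d^2 * (∑ j, w j ^ 2) / 4 = ∑ j, (t^2 * d^2 / 4) * w j ^ 2 by
          rw [← Finset.mul_sum]; ring]
        exact Finset.sum_congr rfl fun j _ => by ring

end Prod

section Tail

variable {hd ld : ℕ} {c : Fin hd → Fin ld → ℝ} {d : ℝ}

set_option maxHeartbeats 1000000 in
set_option maxHeartbeats 1000000 in
lemma mdc_row_tail (hd' : 0 < d) (i₀ : Fin hd) (w : Fin ld → ℝ) {X s : ℝ}
    (hX : (∑ j, w j ^ 2) = X) (hXpos : 0 < X) (hs : 0 ≤ s) :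
    ((matrixUnif c d).prod (matrixUnif c d)
        {Up | s ≤ ∑ j, (Up.2 i₀ j - Up.1 i₀ j) * w j}).toReal ≤
      Real.exp (-(s^2 / (d^2 * X))) := by
  haveI := mdc_matrixUnif_prob (c := c) hd'
  set t₀ := 2 * s / (d^2 * X) with ht₀def
  have ht₀ : 0 ≤ t₀ := div_nonneg (by linarith) (by positivity)
  haveI hfin : IsFiniteMeasure ((matrixUnif c d).prod (matrixUnif c d)) := inferInstance
  have hchern := @ProbabilityTheory.measure_ge_le_exp_mul_mgf
    ((Fin hd → Fin ld → ℝ) × (Fin hd → Fin ld → ℝ)) _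
    (fun Up => ∑ j, (Up.2 i₀ j - Up.1 i₀ j) * w j)
    ((matrixUnif c d).prod (matrixUnif c d)) t₀ hfin s ht₀
    (mdc_prod_integrable hd' i₀ w t₀)
  refine hchern.trans ?_
  have hmgf : ProbabilityTheory.mgf
      (fun Up => ∑ j, (Up.2 i₀ j - Up.1 i₀ j) * w j)
      ((matrixUnif c d).prod (matrixUnif c d)) t₀ ≤
      Real.exp (t₀^2 * d^2 * X / 4) := by
    rw [ProbabilityTheory.mgf, ← hX]
    exact mdc_prod_mgf_le hd' i₀ w t₀
  refine (mul_le_mul_of_nonneg_left hmgf (Real.exp_nonneg (-t₀ * s))).trans (le_of_eq ?_)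
  rw [← Real.exp_add]
  congr 1
  have hdne : d ≠ 0 := hd'.ne'
  have hXne : X ≠ 0 := hXpos.ne'
  rw [ht₀def]
  field_simp
  ring
end Tail

set_option maxHeartbeats 1000000 in
/-- concentration bound (proof:expand_6) in the proof of Theorem 1.
For independent random matrices `U₁, U₂` with independent entries, the `(i,j)` entry
of each uniform on `[c i j − d/2, c i j + d/2]`, with probability at least `1 − δ/k`:
`‖(U₂ − U₁)x‖₂ ≤ d ‖x‖₂ √(h log(2hk/δ))`. -/
theorem matrix_difference_concentration {hd ld : ℕ}
    (hhd : 1 ≤ hd) (hld : 1 ≤ ld) (d : ℝ) (hd' : 0 < d)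
    (x : Fin ld → ℝ) (c : Fin hd → Fin ld → ℝ)
    (δ : ℝ) (hδ : δ ∈ Set.Ioo (0:ℝ) 1) (k : ℝ) (hk : 1 ≤ k) :
    ENNReal.ofReal (1 - δ / k) ≤
      (matrixUnif c d).prod (matrixUnif c d)
        {Up : (Fin hd → Fin ld → ℝ) × (Fin hd → Fin ld → ℝ) |
          l2norm (fun i => ∑ j, (Up.2 i j - Up.1 i j) * x j)
            ≤ d * l2norm x * Real.sqrt (hd * Real.log (2 * hd * k / δ))} := by
  obtain ⟨hδ0, hδ1⟩ := hδ
  haveI := mdc_matrixUnif_prob (c := c) hd'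
  haveI hprob : IsProbabilityMeasure ((matrixUnif c d).prod (matrixUnif c d)) :=
    inferInstance
  set μ := (matrixUnif c d).prod (matrixUnif c d) with hμdef
  set X := ∑ j, x j ^ 2 with hXdef
  set L := Real.log (2 * hd * k / δ) with hLdef
  have hδk : 0 ≤ δ / k := div_nonneg hδ0.le (by linarith)
  have hδk1 : δ / k ≤ 1 := by
    rw [div_le_one (by linarith)]; linarith
  have hhk1 : (1:ℝ) ≤ hd := by exact_mod_cast hhd
  have harg : (2:ℝ) ≤ 2 * hd * k / δ := by
    have h1 : (2:ℝ) ≤ 2 * hd * k := by nlinarith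
    have h2 : 2 * hd * k ≤ 2 * hd * k / δ := by
      rw [le_div_iff₀ hδ0]; nlinarith
    linarith
  have hLpos : 0 < L := Real.log_pos (by linarith)
  have hexpL : Real.exp (-L) = δ / (2 * hd * k) := by
    rw [Real.exp_neg, hLdef, Real.exp_log (by linarith), inv_div]
  -- the event set
  set E := {Up : (Fin hd → Fin ld → ℝ) × (Fin hd → Fin ld → ℝ) |
      l2norm (fun i => ∑ j, (Up.2 i j - Up.1 i j) * x j)
        ≤ d * l2norm x * Real.sqrt (hd * L)} with hEdef
  by_cases hX0 : X = 0
  · -- degenerate case: x = 0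
    have hx : ∀ j, x j = 0 := by
      intro j
      have hsum0 : ∑ j, x j ^ 2 = 0 := by rw [← hXdef]; exact hX0
      have h2 := (Finset.sum_eq_zero_iff_of_nonneg
        (fun j _ => sq_nonneg (x j))).1 hsum0 j (Finset.mem_univ j)
      exact (pow_eq_zero_iff two_ne_zero).1 h2
    have hEuniv : E = Set.univ := by
      ext Up
      simp only [hEdef, Set.mem_setOf_eq, Set.mem_univ, iff_true]
      have h1 : (fun i : Fin hd => ∑ j, (Up.2 i j - Up.1 i j) * x j) = fun _ => 0 := by
        funext i; simp [hx]
      have h2 : l2norm x = 0 := by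
        simp [l2norm, hx]
      rw [h1, h2]
      simp [l2norm]
    rw [hEuniv]
    simp only [measure_univ]
    calc ENNReal.ofReal (1 - δ/k) ≤ ENNReal.ofReal 1 :=
      ENNReal.ofReal_le_ofReal (by linarith)
    _ = 1 := ENNReal.ofReal_one
  · have hXpos : 0 < X :=
      lt_of_le_of_ne (Finset.sum_nonneg fun j _ => sq_nonneg (x j)) (Ne.symm hX0)
    set s := d * Real.sqrt X * Real.sqrt L with hsdef
    have hs : 0 ≤ s := by positivity
    have hs2 : s^2 / (d^2 * X) = L := by
      rw [hsdef, mul_pow, mul_pow, Real.sq_sqrt hXpos.le, Real.sq_sqrt hLpos.le]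
      field_simp
    -- per-row tail bound
    have hrow : ∀ i : Fin hd,
        μ {Up | s < |∑ j, (Up.2 i j - Up.1 i j) * x j|} ≤
          ENNReal.ofReal (δ / (hd * k)) := by
      intro i
      have hA := mdc_row_tail (c := c) hd' i x hXdef.symm hXpos hs
      have hB := mdc_row_tail (c := c) hd' i (fun j => -x j)
        (by rw [hXdef]; exact Finset.sum_congr rfl fun j _ => by ring) hXpos hs
      rw [hs2] at hA hB
      have hBset : {Up : (Fin hd → Fin ld → ℝ) × (Fin hd → Fin ld → ℝ) |
          s ≤ ∑ j, (Up.2 i j - Up.1 i j) * (fun j => -x j) j} =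
          {Up | s ≤ -∑ j, (Up.2 i j - Up.1 i j) * x j} := by
        ext Up
        simp only [Set.mem_setOf_eq]
        rw [← Finset.sum_neg_distrib]
        exact ⟨fun h => h.trans_eq (Finset.sum_congr rfl fun j _ => by ring),
          fun h => h.trans_eq (Finset.sum_congr rfl fun j _ => by ring)⟩
      rw [hBset] at hB
      have hsub : {Up : (Fin hd → Fin ld → ℝ) × (Fin hd → Fin ld → ℝ) |
          s < |∑ j, (Up.2 i j - Up.1 i j) * x j|} ⊆
          {Up | s ≤ ∑ j, (Up.2 i j - Up.1 i j) * x j} ∪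
          {Up | s ≤ -∑ j, (Up.2 i j - Up.1 i j) * x j} := by
        intro Up hUp
        have hUp' : s < |∑ j, (Up.2 i j - Up.1 i j) * x j| := hUp
        rcases lt_abs.1 hUp' with h | h
        · exact Or.inl h.le
        · exact Or.inr (by simpa using h.le)
      have hAe : μ {Up | s ≤ ∑ j, (Up.2 i j - Up.1 i j) * x j} ≤
          ENNReal.ofReal (Real.exp (-L)) :=
        (ENNReal.le_ofReal_iff_toReal_le (measure_ne_top μ _) (Real.exp_nonneg _)).2 hA
      have hBe : μ {Up | s ≤ -∑ j, (Up.2 i j - Up.1 i j) * x j} ≤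
          ENNReal.ofReal (Real.exp (-L)) :=
        (ENNReal.le_ofReal_iff_toReal_le (measure_ne_top μ _) (Real.exp_nonneg _)).2 hB
      calc μ {Up | s < |∑ j, (Up.2 i j - Up.1 i j) * x j|}
          ≤ μ ({Up | s ≤ ∑ j, (Up.2 i j - Up.1 i j) * x j} ∪
              {Up | s ≤ -∑ j, (Up.2 i j - Up.1 i j) * x j}) := measure_mono hsub
        _ ≤ μ {Up | s ≤ ∑ j, (Up.2 i j - Up.1 i j) * x j} +
              μ {Up | s ≤ -∑ j, (Up.2 i j - Up.1 i j) * x j} := measure_union_le _ _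
        _ ≤ ENNReal.ofReal (Real.exp (-L)) + ENNReal.ofReal (Real.exp (-L)) :=
            add_le_add hAe hBe
        _ = ENNReal.ofReal (δ / (hd * k)) := by
            rw [← ENNReal.ofReal_add (Real.exp_nonneg _) (Real.exp_nonneg _), hexpL]
            congr 1
            field_simp
            ring
    -- complement of the event is contained in the union of the bad row events
    have hEc : Eᶜ ⊆ ⋃ i : Fin hd,
        {Up : (Fin hd → Fin ld → ℝ) × (Fin hd → Fin ld → ℝ) |
          s < |∑ j, (Up.2 i j - Up.1 i j) * x j|} := by
      intro Up hUp
      by_contra hcon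
      simp only [Set.mem_iUnion, Set.mem_setOf_eq, not_exists, not_lt] at hcon
      apply hUp
      show l2norm (fun i => ∑ j, (Up.2 i j - Up.1 i j) * x j) ≤
        d * l2norm x * Real.sqrt (hd * L)
      have hsum : ∑ i : Fin hd, (∑ j, (Up.2 i j - Up.1 i j) * x j)^2 ≤
          ∑ _i : Fin hd, s^2 := by
        refine Finset.sum_le_sum fun i _ => ?_
        rw [← sq_abs]
        exact pow_le_pow_left₀ (abs_nonneg _) (hcon i) 2
      have h1 : l2norm (fun i => ∑ j, (Up.2 i j - Up.1 i j) * x j) ≤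
          Real.sqrt (hd * s^2) := by
        rw [l2norm]
        refine Real.sqrt_le_sqrt ?_
        simpa using hsum
      refine h1.trans (le_of_eq ?_)
      rw [Real.sqrt_mul (Nat.cast_nonneg hd), Real.sqrt_sq hs,
        Real.sqrt_mul (Nat.cast_nonneg hd), hsdef]
      have hlx : l2norm x = Real.sqrt X := rfl
      rw [hlx]
      ring
    -- measurability of the event
    have hmeas : MeasurableSet E := by
      rw [hEdef]
      apply measurableSet_le _ measurable_const
      unfold l2norm
      have hf : Measurable (fun Up : (Fin hd → Fin ld → ℝ) × (Fin hd → Fin ld → ℝ) =>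
          Real.sqrt (∑ i, (∑ j, (Up.2 i j - Up.1 i j) * x j) ^ 2)) := by
        fun_prop
      exact hf
    -- union bound
    have hcompl : μ Eᶜ ≤ ENNReal.ofReal (δ / k) := by
      calc μ Eᶜ ≤ μ (⋃ i : Fin hd, {Up : (Fin hd → Fin ld → ℝ) ×
            (Fin hd → Fin ld → ℝ) | s < |∑ j, (Up.2 i j - Up.1 i j) * x j|}) :=
            measure_mono hEc
        _ ≤ ∑' i : Fin hd, μ {Up : (Fin hd → Fin ld → ℝ) ×
            (Fin hd → Fin ld → ℝ) | s < |∑ j, (Up.2 i j - Up.1 i j) * x j|} :=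
            measure_iUnion_le _
        _ = ∑ i : Fin hd, μ {Up : (Fin hd → Fin ld → ℝ) ×
            (Fin hd → Fin ld → ℝ) | s < |∑ j, (Up.2 i j - Up.1 i j) * x j|} :=
            tsum_fintype _
        _ ≤ ∑ _i : Fin hd, ENNReal.ofReal (δ / (hd * k)) :=
            Finset.sum_le_sum fun i _ => hrow i
        _ = (hd : ENNReal) * ENNReal.ofReal (δ / (hd * k)) := by
            rw [Finset.sum_const, Finset.card_univ, Fintype.card_fin, nsmul_eq_mul]
        _ = ENNReal.ofReal (δ / k) := by
            rw [← ENNReal.ofReal_natCast hd,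
              ← ENNReal.ofReal_mul (Nat.cast_nonneg hd)]
            congr 1
            have hhd0 : (hd:ℝ) ≠ 0 := by positivity
            field_simp
    -- conclude
    have hcc := prob_compl_eq_one_sub (μ := μ) hmeas.compl
    rw [compl_compl] at hcc
    calc ENNReal.ofReal (1 - δ / k) = ENNReal.ofReal 1 - ENNReal.ofReal (δ / k) :=
          ENNReal.ofReal_sub 1 hδk
      _ = 1 - ENNReal.ofReal (δ / k) := by rw [ENNReal.ofReal_one]
      _ ≤ 1 - μ Eᶜ := tsub_le_tsub_left hcompl 1
      _ = μ E := hcc.symm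
end

section
/- Let K ≥ 1, U₁, …, U_K ∈ ℝ^{h×l}, v*, ṽ₁, …, ṽ_K ∈ ℝ^h, set vᵢ = v* + ṽᵢ, Ū = (1/K)∑_{i=1}^K Uᵢ, and v̄ = (1/K)∑_{i=1}^K vᵢ. Then for every x ∈ ℝ^l: |v̄ᵀσ(Ū x) − (1/K)∑_{i=1}^K vᵢᵀσ(Uᵢ x)| ≤ (1/K²) ∑_{i=1}^K (‖ṽᵢ‖₂ + ‖v*‖₂) ∑_{j ≠ i} ‖(U_j − Uᵢ)x‖₂. -/
lemma l2norm_eq_norm {n : ℕ} (v : Fin n → ℝ) :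
    l2norm v = ‖(WithLp.equiv 2 (Fin n → ℝ)).symm v‖ := by
  rw [EuclideanSpace.norm_eq]
  simp [l2norm, sq_abs]

lemma l2norm_nonneg {n : ℕ} (v : Fin n → ℝ) : 0 ≤ l2norm v := Real.sqrt_nonneg _

lemma l2_cs {n : ℕ} (v w : Fin n → ℝ) : |∑ i, v i * w i| ≤ l2norm v * l2norm w := by
  rw [l2norm_eq_norm, l2norm_eq_norm]
  have := abs_real_inner_le_norm ((WithLp.equiv 2 (Fin n → ℝ)).symm v)
    ((WithLp.equiv 2 (Fin n → ℝ)).symm w)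
  simpa [PiLp.inner_apply, RCLike.inner_apply, conj_trivial, mul_comm] using this

lemma l2_mono {n : ℕ} (f g : Fin n → ℝ) (h : ∀ i, |f i| ≤ |g i|) :
    l2norm f ≤ l2norm g := by
  apply Real.sqrt_le_sqrt
  apply Finset.sum_le_sum
  intro i _
  rw [← sq_abs (f i), ← sq_abs (g i)]
  exact pow_le_pow_left₀ (abs_nonneg _) (h i) 2

lemma l2_add_le {n : ℕ} (v w : Fin n → ℝ) :
    l2norm (v + w) ≤ l2norm v + l2norm w := by
  simp only [l2norm_eq_norm]
  simpa using norm_add_le ((WithLp.equiv 2 (Fin n → ℝ)).symm v)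
    ((WithLp.equiv 2 (Fin n → ℝ)).symm w)

lemma l2_sum_le {n : ℕ} {ι : Type*} (s : Finset ι) (f : ι → Fin n → ℝ) :
    l2norm (fun i => ∑ j ∈ s, f j i) ≤ ∑ j ∈ s, l2norm (f j) := by
  calc l2norm (fun i => ∑ j ∈ s, f j i)
      = ‖∑ j ∈ s, (WithLp.equiv 2 (Fin n → ℝ)).symm (f j)‖ := by
        rw [l2norm_eq_norm]; congr 1; ext i
        simp [Finset.sum_apply]
    _ ≤ ∑ j ∈ s, ‖(WithLp.equiv 2 (Fin n → ℝ)).symm (f j)‖ := norm_sum_le _ _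
    _ = ∑ j ∈ s, l2norm (f j) := by simp [l2norm_eq_norm]

lemma l2_smul {n : ℕ} (c : ℝ) (v : Fin n → ℝ) :
    l2norm (fun i => c * v i) = |c| * l2norm v := by
  simp [l2norm, mul_pow, ← Finset.mul_sum, Real.sqrt_mul (sq_nonneg c), Real.sqrt_sq_eq_abs]

/-- deterministic core of the proof of Theorem 2.
With `vᵢ = v* + ṽᵢ`, `Ū = (1/K)∑ Uᵢ`, `v̄ = (1/K)∑ vᵢ`, for every `x`:
`|v̄ᵀσ(Ūx) − (1/K)∑ vᵢᵀσ(Uᵢx)|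
  ≤ (1/K²) ∑ᵢ (‖ṽᵢ‖₂ + ‖v*‖₂) ∑_{j≠i} ‖(U_j − Uᵢ)x‖₂`. -/
theorem group_deviation_deterministic_bound {hd ld : ℕ}
    (K : ℕ) (hK : 1 ≤ K)
    (U : Fin K → Fin hd → Fin ld → ℝ) (vstar : Fin hd → ℝ)
    (vt : Fin K → Fin hd → ℝ) (x : Fin ld → ℝ) :
    |net ((K : ℝ)⁻¹ • ∑ k, U k) ((K : ℝ)⁻¹ • ∑ k, (vstar + vt k)) x
      - (K : ℝ)⁻¹ * ∑ k, net (U k) (vstar + vt k) x|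
    ≤ ((K : ℝ) ^ 2)⁻¹ * ∑ k, (l2norm (vt k) + l2norm vstar)
        * ∑ j ∈ Finset.univ.erase k,
            l2norm (fun i => ∑ m, (U j i m - U k i m) * x m) := by
  classical
  have hKpos : (0:ℝ) < K := by
    have : (0:ℕ) < K := hK
    exact_mod_cast this
  set b : Fin K → Fin hd → ℝ := fun k i => ∑ m, U k i m * x m with hb
  set a : Fin hd → ℝ := fun i => (K:ℝ)⁻¹ * ∑ k, b k i with ha
  have harg : ∀ i : Fin hd, (∑ m, ((K:ℝ)⁻¹ * ∑ k, U k i m) * x m) = a i := by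
    intro i
    simp only [ha, hb]
    calc ∑ m, ((K:ℝ)⁻¹ * ∑ k, U k i m) * x m
        = ∑ m, ∑ k, (K:ℝ)⁻¹ * (U k i m * x m) := by
          refine Finset.sum_congr rfl fun m _ => ?_
          rw [mul_assoc, Finset.sum_mul, Finset.mul_sum]
      _ = ∑ k, ∑ m, (K:ℝ)⁻¹ * (U k i m * x m) := Finset.sum_comm
      _ = (K:ℝ)⁻¹ * ∑ k, ∑ m, U k i m * x m := by
          simp only [← Finset.mul_sum]
  have key : net ((K : ℝ)⁻¹ • ∑ k, U k) ((K : ℝ)⁻¹ • ∑ k, (vstar + vt k)) x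
      - (K : ℝ)⁻¹ * ∑ k, net (U k) (vstar + vt k) x
      = (K:ℝ)⁻¹ * ∑ k, ∑ i, (vstar i + vt k i) * (max 0 (a i) - max 0 (b k i)) := by
    simp only [net, Pi.smul_apply, Finset.sum_apply, smul_eq_mul, Pi.add_apply, ← hb]
    simp only [harg]
    have L1 : ∑ i, ((K:ℝ)⁻¹ * ∑ k, (vstar i + vt k i)) * max 0 (a i)
        = (K:ℝ)⁻¹ * ∑ k, ∑ i, (vstar i + vt k i) * max 0 (a i) := by
      calc ∑ i, ((K:ℝ)⁻¹ * ∑ k, (vstar i + vt k i)) * max 0 (a i)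
          = ∑ i, ∑ k, (K:ℝ)⁻¹ * ((vstar i + vt k i) * max 0 (a i)) := by
            refine Finset.sum_congr rfl fun i _ => ?_
            rw [mul_assoc, Finset.sum_mul, Finset.mul_sum]
        _ = ∑ k, ∑ i, (K:ℝ)⁻¹ * ((vstar i + vt k i) * max 0 (a i)) := Finset.sum_comm
        _ = (K:ℝ)⁻¹ * ∑ k, ∑ i, (vstar i + vt k i) * max 0 (a i) := by
            simp only [← Finset.mul_sum]
    rw [L1, ← mul_sub, ← Finset.sum_sub_distrib]
    congr 1
    refine Finset.sum_congr rfl fun k _ => ?_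
    rw [← Finset.sum_sub_distrib]
    refine Finset.sum_congr rfl fun i _ => ?_
    ring
  rw [key]
  have hinv : (0:ℝ) ≤ (K:ℝ)⁻¹ := by positivity
  calc |(K:ℝ)⁻¹ * ∑ k, ∑ i, (vstar i + vt k i) * (max 0 (a i) - max 0 (b k i))|
      ≤ (K:ℝ)⁻¹ * ∑ k, |∑ i, (vstar i + vt k i) * (max 0 (a i) - max 0 (b k i))| := by
        rw [abs_mul, abs_of_nonneg hinv]
        exact mul_le_mul_of_nonneg_left (Finset.abs_sum_le_sum_abs _ _) hinv
    _ ≤ (K:ℝ)⁻¹ * ∑ k, (l2norm (vt k) + l2norm vstar) *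
          ((K:ℝ)⁻¹ * ∑ j ∈ Finset.univ.erase k,
            l2norm (fun i => ∑ m, (U j i m - U k i m) * x m)) := by
        refine mul_le_mul_of_nonneg_left (Finset.sum_le_sum fun k _ => ?_) hinv
        have h1 : |∑ i, (vstar i + vt k i) * (max 0 (a i) - max 0 (b k i))|
            ≤ l2norm (vstar + vt k) * l2norm (fun i => max 0 (a i) - max 0 (b k i)) := by
          simpa using l2_cs (vstar + vt k) (fun i => max 0 (a i) - max 0 (b k i))
        have h2 : l2norm (vstar + vt k) ≤ l2norm (vt k) + l2norm vstar := by
          rw [add_comm (l2norm (vt k))]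
          exact l2_add_le _ _
        have h3 : l2norm (fun i => max 0 (a i) - max 0 (b k i))
            ≤ l2norm (fun i => a i - b k i) := by
          refine l2_mono _ _ fun i => ?_
          rw [max_comm 0 (a i), max_comm 0 (b k i)]
          exact abs_max_sub_max_le_abs _ _ _
        have h4 : l2norm (fun i => a i - b k i)
            ≤ (K:ℝ)⁻¹ * ∑ j ∈ Finset.univ.erase k,
                l2norm (fun i => ∑ m, (U j i m - U k i m) * x m) := by
          have ha' : ∀ i, a i - b k i
              = (K:ℝ)⁻¹ * ∑ j ∈ Finset.univ.erase k, (b j i - b k i) := by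
            intro i
            rw [Finset.sum_erase_eq_sub (Finset.mem_univ k), sub_self,
              Finset.sum_sub_distrib, Finset.sum_const, Finset.card_univ,
              Fintype.card_fin, sub_zero, ha, nsmul_eq_mul, mul_sub,
              ← mul_assoc, inv_mul_cancel₀ (ne_of_gt hKpos), one_mul]
          calc l2norm (fun i => a i - b k i)
              = l2norm (fun i => (K:ℝ)⁻¹ * ∑ j ∈ Finset.univ.erase k, (b j i - b k i)) := by
                congr 1; funext i; exact ha' i
            _ = |(K:ℝ)⁻¹| * l2norm (fun i => ∑ j ∈ Finset.univ.erase k, (b j i - b k i)) :=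
                l2_smul _ _
            _ ≤ (K:ℝ)⁻¹ * ∑ j ∈ Finset.univ.erase k, l2norm (fun i => b j i - b k i) := by
                rw [abs_of_nonneg hinv]
                exact mul_le_mul_of_nonneg_left (l2_sum_le _ _) hinv
            _ = (K:ℝ)⁻¹ * ∑ j ∈ Finset.univ.erase k,
                l2norm (fun i => ∑ m, (U j i m - U k i m) * x m) := by
                congr 1
                refine Finset.sum_congr rfl fun j _ => ?_
                congr 1; funext i
                simp only [hb, ← Finset.sum_sub_distrib]
                refine Finset.sum_congr rfl fun m _ => ?_
                ring
        exact h1.trans (mul_le_mul h2 (h3.trans h4) (l2norm_nonneg _)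
          (add_nonneg (l2norm_nonneg _) (l2norm_nonneg _)))
    _ = ((K : ℝ) ^ 2)⁻¹ * ∑ k, (l2norm (vt k) + l2norm vstar)
        * ∑ j ∈ Finset.univ.erase k,
            l2norm (fun i => ∑ m, (U j i m - U k i m) * x m) := by
        rw [Finset.mul_sum, Finset.mul_sum]
        refine Finset.sum_congr rfl fun k _ => ?_
        ring
end
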